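/- arXiv:1005.0816 — 2 statements merged into one kernel-verified Lean document; each statement's English description precedes it below -/
import Mathlib

section
/- There exist absolute constants c1, c2, c3 for which the following holds. Let 1 ≤ α ≤ 2, let N be an integer, and let v ∈ R^N be a vector such that there are A, B > 0 with ( Σ_{i∈I} v_i^2 )^{1/2} ≤ A + B·√|I|·log^{1/α}(eN/|I|) for every nonempty I ⊂ {1,...,N}. If β ≥ c1·B·max{ log^{1/α}(c2·N·B^2/A^2), 1 } and E_β = { i : |v_i| ≥ β }, then |E_β| ≤ max{ 4·A^2/β^2, eN·exp(−(β/(2B))^α) } and ( Σ_{i∈E_β} v_i^2 )^{1/2} ≤ c3·A. -/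
set_option maxHeartbeats 1000000


open MeasureTheory
open scoped Classical

noncomputable section

/-- The set of admissible constants in the definition of the ψ_α Orlicz norm. -/
def psiSet {Ω : Type*} [MeasurableSpace Ω] (μ : Measure Ω) (α : ℝ) (f : Ω → ℝ) : Set ℝ :=
  {c : ℝ | 0 < c ∧ ∫ ω, Real.exp (|f ω| ^ α / c ^ α) ∂μ ≤ 2}

/-- The ψ_α Orlicz (quasi-)norm of `f` with respect to `μ`. -/
def psiNorm {Ω : Type*} [MeasurableSpace Ω] (μ : Measure Ω) (α : ℝ) (f : Ω → ℝ) : ℝ :=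
  sInf (psiSet μ α f)

/-- Talagrand's γ₂ functional of a set `T` with respect to a (pseudo)metric `d`. -/
def gamma2 {X : Type*} (T : Set X) (d : X → X → ℝ) : ℝ :=
  sInf {r : ℝ | 0 ≤ r ∧ ∃ A : ℕ → Finset X,
    (∀ s, (A s).Nonempty ∧ ↑(A s) ⊆ T) ∧ (A 0).card = 1 ∧
    (∀ s, (A s).card ≤ 2 ^ 2 ^ s) ∧
    ∀ t ∈ T, ∀ n : ℕ,
      ∑ s ∈ Finset.range n, (2 : ℝ) ^ ((s : ℝ) / 2) * sInf (d t '' ↑(A s)) ≤ r}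

/-- The ψ₂ distance between two functions. -/
def psi2Dist {Ω : Type*} [MeasurableSpace Ω] (μ : Measure Ω) (f g : Ω → ℝ) : ℝ :=
  psiNorm μ 2 (fun ω => f ω - g ω)

/-- γ₂(F, ψ₂): the γ₂ functional of a class of functions with the ψ₂ metric. -/
def gamma2Psi2 {Ω : Type*} [MeasurableSpace Ω] (μ : Measure Ω) (F : Set (Ω → ℝ)) : ℝ :=
  gamma2 F (psi2Dist μ)

/-- d_{ψα}: the ψ_α diameter of a class, `sup_{f ∈ F} ‖f‖_{ψα}`. -/
def dPsi {Ω : Type*} [MeasurableSpace Ω] (μ : Measure Ω) (α : ℝ) (F : Set (Ω → ℝ)) : ℝ :=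
  sSup (psiNorm μ α '' F)

/-- A class of measurable, integrable, mean-zero functions. -/
def MeanZero {Ω : Type*} [MeasurableSpace Ω] (μ : Measure Ω) (F : Set (Ω → ℝ)) : Prop :=
  ∀ f ∈ F, Measurable f ∧ Integrable f μ ∧ ∫ ω, f ω ∂μ = 0

/-- Every function of the class has a finite ψ₂ norm. -/
def FinitePsi2 {Ω : Type*} [MeasurableSpace Ω] (μ : Measure Ω) (F : Set (Ω → ℝ)) : Prop :=
  ∀ f ∈ F, (psiSet μ 2 f).Nonempty

/-- `X 1, ..., X N` are independent, distributed according to `μ`. -/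
def IIDSample {Ω Ω' : Type*} [MeasurableSpace Ω] [MeasurableSpace Ω']
    (μ : Measure Ω) (P : Measure Ω') {N : ℕ} (X : Fin N → Ω' → Ω) : Prop :=
  (∀ i, Measurable (X i)) ∧
  ProbabilityTheory.iIndepFun X P ∧
  ∀ i, Measure.map (X i) P = μ

/-- Lemma 4.3: the coordinates of a vector with regular `ℓ₂` growth on subsets. -/
theorem statement9 :
    ∃ c1 c2 c3 : ℝ, 0 < c1 ∧ 0 < c2 ∧ 0 < c3 ∧
      ∀ (α : ℝ), 1 ≤ α → α ≤ 2 →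
      ∀ (N : ℕ), 0 < N →
      ∀ (v : Fin N → ℝ) (A B : ℝ), 0 < A → 0 < B →
        (∀ I : Finset (Fin N), I.Nonempty →
          Real.sqrt (∑ i ∈ I, v i ^ 2) ≤
            A + B * Real.sqrt I.card * Real.log (Real.exp 1 * N / I.card) ^ ((1 : ℝ) / α)) →
        ∀ β : ℝ,
          c1 * B * max (Real.log (c2 * N * B ^ 2 / A ^ 2) ^ ((1 : ℝ) / α)) 1 ≤ β →
          ((Finset.univ.filter fun i : Fin N => β ≤ |v i|).card : ℝ) ≤
              max (4 * A ^ 2 / β ^ 2)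
                (Real.exp 1 * N * Real.exp (-((β / (2 * B)) ^ α))) ∧
          Real.sqrt (∑ i ∈ Finset.univ.filter (fun i : Fin N => β ≤ |v i|), v i ^ 2) ≤
            c3 * A := by
  refine ⟨4, Real.exp 1, 3, by norm_num, Real.exp_pos 1, by norm_num, ?_⟩
  intro α hα1 hα2 N hN v A B hA hB hv β hβ
  have hαpos : (0:ℝ) < α := by linarith
  set X : ℝ := Real.exp 1 * N * B ^ 2 / A ^ 2 with hXdef
  have hXpos : 0 < X := by
    have := Real.exp_pos 1
    have hN' : (0:ℝ) < N := by exact_mod_cast hN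
    positivity
  set M : ℝ := max (Real.log X ^ ((1:ℝ)/α)) 1 with hMdef
  have hM1 : 1 ≤ M := le_max_right _ _
  have hβ4 : 4 * B * M ≤ β := hβ
  have hβpos : 0 < β := lt_of_lt_of_le (by nlinarith) hβ4
  set t : ℝ := (β / (2*B)) ^ α with htdef
  have hb2 : 2 * M ≤ β / (2*B) := by
    rw [le_div_iff₀ (by linarith)]; nlinarith
  have hMα : Real.log X ≤ M ^ α := by
    rcases le_or_gt (Real.log X) 0 with h | h
    · exact h.trans (zero_le_one.trans (Real.one_le_rpow hM1 hαpos.le))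
    · calc Real.log X = (Real.log X ^ ((1:ℝ)/α)) ^ α := by
            rw [← Real.rpow_mul h.le, one_div_mul_cancel hαpos.ne', Real.rpow_one]
        _ ≤ M ^ α := Real.rpow_le_rpow (Real.rpow_nonneg h.le _) (le_max_left _ _) hαpos.le
  have hMα1 : 1 ≤ M ^ α := Real.one_le_rpow hM1 hαpos.le
  have ht2 : 2 * M ^ α ≤ t := by
    have h2α : (2:ℝ) ≤ 2 ^ α := by
      calc (2:ℝ) = (2:ℝ) ^ (1:ℝ) := (Real.rpow_one 2).symm
        _ ≤ 2 ^ α := Real.rpow_le_rpow_of_exponent_le one_le_two hα1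
    calc 2 * M ^ α ≤ 2 ^ α * M ^ α := by nlinarith
      _ = (2 * M) ^ α := (Real.mul_rpow (by norm_num) (by linarith)).symm
      _ ≤ t := Real.rpow_le_rpow (by linarith) hb2 hαpos.le
  have htlog : 2 * Real.log X ≤ t := by nlinarith [ht2, hMα]
  have ht2' : 2 ≤ t := by linarith
  have htpos : 0 < t := by linarith
  -- key: e * N * B^2 * exp (-(t/2)) ≤ A^2
  have hkey : Real.exp 1 * ↑N * B ^ 2 * Real.exp (-(t/2)) ≤ A ^ 2 := by
    have h1 : X ≤ Real.exp (t/2) := by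
      calc X = Real.exp (Real.log X) := (Real.exp_log hXpos).symm
        _ ≤ Real.exp (t/2) := Real.exp_le_exp.mpr (by linarith)
    have h2 : Real.exp 1 * ↑N * B ^ 2 = X * A ^ 2 := by
      rw [hXdef, div_mul_cancel₀]; positivity
    rw [h2]
    calc X * A ^ 2 * Real.exp (-(t/2)) ≤ Real.exp (t/2) * A ^ 2 * Real.exp (-(t/2)) :=
          mul_le_mul_of_nonneg_right (mul_le_mul_of_nonneg_right h1 (sq_nonneg A))
            (Real.exp_pos _).le
      _ = A ^ 2 := by rw [mul_comm, ← mul_assoc, ← Real.exp_add]; simp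
  -- key2 : B * sqrt(e*N) * exp(-(t/4)) ≤ A
  have hN0 : (0:ℝ) < N := by exact_mod_cast hN
  have hkey2 : B * Real.sqrt (Real.exp 1 * N) * Real.exp (-(t/4)) ≤ A := by
    have e2 : Real.exp (-(t/2)) = Real.exp (-(t/4)) ^ 2 := by
      rw [sq, ← Real.exp_add]; congr 1; ring
    have heq : B * Real.sqrt (Real.exp 1 * N) * Real.exp (-(t/4)) =
        Real.sqrt (Real.exp 1 * ↑N * B ^ 2 * Real.exp (-(t/2))) := by
      have hsq : Real.exp 1 * ↑N * B ^ 2 * Real.exp (-(t/2)) =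
          (B * Real.sqrt (Real.exp 1 * N) * Real.exp (-(t/4))) ^ 2 := by
        rw [e2, mul_pow, mul_pow, Real.sq_sqrt (by positivity : (0:ℝ) ≤ Real.exp 1 * N)]
        ring
      rw [hsq, Real.sqrt_sq (by positivity)]
    rw [heq]
    calc Real.sqrt (Real.exp 1 * ↑N * B ^ 2 * Real.exp (-(t/2))) ≤ Real.sqrt (A ^ 2) :=
          Real.sqrt_le_sqrt hkey
      _ = A := Real.sqrt_sq hA.le
  set E := Finset.univ.filter fun i : Fin N => β ≤ |v i| with hEdef
  rcases E.eq_empty_or_nonempty with hE | hE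
  · rw [hE]
    constructor
    · simp only [Finset.card_empty, Nat.cast_zero]
      exact le_max_of_le_left (by positivity)
    · simp only [Finset.sum_empty, Real.sqrt_zero]
      positivity
  · have hk1 : 1 ≤ E.card := Finset.card_pos.mpr hE
    have hkN : E.card ≤ N := by
      calc E.card ≤ Finset.univ.card := Finset.card_le_card (Finset.filter_subset _ _)
        _ = N := Finset.card_univ.trans (Fintype.card_fin N)
    have hk1' : (1:ℝ) ≤ E.card := by exact_mod_cast hk1
    have hkpos : (0:ℝ) < E.card := by linarith
    set u : ℝ := Real.log (Real.exp 1 * N / E.card) with hudef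
    have hratpos : (0:ℝ) < Real.exp 1 * N / E.card := by positivity
    have hu1 : 1 ≤ u := by
      rw [hudef, Real.le_log_iff_exp_le hratpos, le_div_iff₀ hkpos]
      have hkN' : (E.card : ℝ) ≤ N := by exact_mod_cast hkN
      exact mul_le_mul_of_nonneg_left hkN' (Real.exp_pos 1).le
    have hexpu : Real.exp u * E.card = Real.exp 1 * N := by
      have h := Real.exp_log hratpos
      rw [hudef, h]; field_simp
    have hkeq : (E.card : ℝ) = Real.exp 1 * N * Real.exp (-u) := by
      rw [Real.exp_neg, ← hexpu]
      field_simp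
    -- lower bound on the sum
    have hlow : β * Real.sqrt E.card ≤ Real.sqrt (∑ i ∈ E, v i ^ 2) := by
      have hsum : E.card • (β ^ 2) ≤ ∑ i ∈ E, v i ^ 2 := by
        apply Finset.card_nsmul_le_sum
        intro i hi
        rw [hEdef, Finset.mem_filter] at hi
        exact (pow_le_pow_left₀ hβpos.le hi.2 2).trans_eq (sq_abs (v i))
      have h2 : Real.sqrt ((E.card : ℝ) * β ^ 2) ≤ Real.sqrt (∑ i ∈ E, v i ^ 2) := by
        apply Real.sqrt_le_sqrt
        simpa [nsmul_eq_mul] using hsum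
      calc β * Real.sqrt E.card = Real.sqrt ((E.card : ℝ) * β ^ 2) := by
            rw [Real.sqrt_mul hkpos.le, Real.sqrt_sq hβpos.le]; ring
        _ ≤ _ := h2
    have hup : Real.sqrt (∑ i ∈ E, v i ^ 2) ≤
        A + B * Real.sqrt E.card * u ^ ((1:ℝ)/α) := hv E hE
    have hsqk : (0:ℝ) < Real.sqrt E.card := Real.sqrt_pos.mpr hkpos
    rcases le_or_gt (B * Real.sqrt E.card * u ^ ((1:ℝ)/α)) A with hcase | hcase
    · -- easy case
      constructor
      · apply le_max_of_le_left
        have h2A : β * Real.sqrt E.card ≤ 2 * A := by linarith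
        rw [le_div_iff₀ (by positivity)]
        have hmm := mul_le_mul h2A h2A (mul_nonneg hβpos.le hsqk.le) (by linarith : (0:ℝ) ≤ 2 * A)
        have hksq : (E.card:ℝ) = Real.sqrt E.card * Real.sqrt E.card :=
          (Real.mul_self_sqrt hkpos.le).symm
        calc (E.card:ℝ) * β ^ 2 = (β * Real.sqrt E.card) * (β * Real.sqrt E.card) := by
              rw [show (β * Real.sqrt E.card) * (β * Real.sqrt E.card) =
                (Real.sqrt E.card * Real.sqrt E.card) * β ^ 2 by ring, ← hksq]
          _ ≤ (2 * A) * (2 * A) := hmm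
          _ = 4 * A ^ 2 := by ring
      · calc Real.sqrt (∑ i ∈ E, v i ^ 2) ≤ A + A := by linarith
          _ ≤ 3 * A := by linarith
    · -- hard case
      have hu1α : 1 ≤ u ^ ((1:ℝ)/α) := Real.one_le_rpow hu1 (by positivity)
      have hβu : β ≤ 2 * B * u ^ ((1:ℝ)/α) := by
        have heq : (2 * B * u ^ ((1:ℝ)/α)) * Real.sqrt E.card =
            2 * (B * Real.sqrt E.card * u ^ ((1:ℝ)/α)) := by ring
        have h1 : β * Real.sqrt E.card ≤ (2 * B * u ^ ((1:ℝ)/α)) * Real.sqrt E.card := by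
          rw [heq]; linarith
        exact le_of_mul_le_mul_right h1 hsqk
      have htu : t ≤ u := by
        have hdiv : β / (2*B) ≤ u ^ ((1:ℝ)/α) := by
          rw [div_le_iff₀ (by linarith)]; linarith
        calc t = (β / (2*B)) ^ α := rfl
          _ ≤ (u ^ ((1:ℝ)/α)) ^ α := Real.rpow_le_rpow (by positivity) hdiv hαpos.le
          _ = u := by rw [← Real.rpow_mul (by linarith), one_div_mul_cancel hαpos.ne',
                Real.rpow_one]
      constructor
      · apply le_max_of_le_right
        rw [hkeq]
        have hmm : Real.exp (-u) ≤ Real.exp (-t) := Real.exp_le_exp.mpr (by linarith)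
        exact mul_le_mul_of_nonneg_left hmm (by positivity)
      · -- second bound
        have huα : u ^ ((1:ℝ)/α) ≤ u :=
          (Real.rpow_le_rpow_of_exponent_le hu1 (by
            rw [div_le_one hαpos]; exact hα1)).trans_eq (Real.rpow_one u)
        have hsqrtk : Real.sqrt E.card = Real.sqrt (Real.exp 1 * N) * Real.exp (-(u/2)) := by
          have e2 : Real.exp (-u) = Real.exp (-(u/2)) ^ 2 := by
            rw [sq, ← Real.exp_add]; congr 1; ring
          rw [hkeq, e2, Real.sqrt_mul (by positivity), Real.sqrt_sq (Real.exp_pos _).le]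
        have he := Real.exp_pos 1
        have hue : u * Real.exp (-(u/4)) ≤ 4 / Real.exp 1 := by
          have h1 : u/4 ≤ Real.exp (u/4 - 1) := by
            linarith [Real.add_one_le_exp (u/4 - 1)]
          rw [Real.exp_sub, le_div_iff₀ he] at h1
          have h5 : Real.exp (u/4) * Real.exp (-(u/4)) = 1 := by
            rw [← Real.exp_add]; simp
          rw [le_div_iff₀ he]
          have h6 := mul_le_mul_of_nonneg_right h1 (Real.exp_pos (-(u/4))).le
          rw [h5] at h6
          nlinarith [h6]
        have hmain : B * Real.sqrt E.card * u ^ ((1:ℝ)/α) ≤ 2 * A := by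
          have h0 : (0:ℝ) ≤ B * Real.sqrt (Real.exp 1 * N) * Real.exp (-(u/2)) := by
            positivity
          have hBN : (0:ℝ) ≤ B * Real.sqrt (Real.exp 1 * N) := by positivity
          have step1 : B * Real.sqrt E.card * u ^ ((1:ℝ)/α) ≤
              B * Real.sqrt (Real.exp 1 * N) * (Real.exp (-(u/2)) * u) := by
            rw [hsqrtk]
            calc B * (Real.sqrt (Real.exp 1 * N) * Real.exp (-(u/2))) * u ^ ((1:ℝ)/α)
                = (B * Real.sqrt (Real.exp 1 * N) * Real.exp (-(u/2))) * u ^ ((1:ℝ)/α) := by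
                  ring
              _ ≤ (B * Real.sqrt (Real.exp 1 * N) * Real.exp (-(u/2))) * u :=
                  mul_le_mul_of_nonneg_left huα h0
              _ = B * Real.sqrt (Real.exp 1 * N) * (Real.exp (-(u/2)) * u) := by ring
          have step2 : Real.exp (-(u/2)) * u ≤ (4 / Real.exp 1) * Real.exp (-(t/4)) := by
            have e2 : Real.exp (-(u/2)) = Real.exp (-(u/4)) * Real.exp (-(u/4)) := by
              rw [← Real.exp_add]; congr 1; ring
            rw [e2]
            have hx : Real.exp (-(u/4)) ≤ Real.exp (-(t/4)) :=
              Real.exp_le_exp.mpr (by linarith)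
            have h4e : (0:ℝ) ≤ 4 / Real.exp 1 := by positivity
            calc Real.exp (-(u/4)) * Real.exp (-(u/4)) * u
                = (u * Real.exp (-(u/4))) * Real.exp (-(u/4)) := by ring
              _ ≤ (4 / Real.exp 1) * Real.exp (-(u/4)) :=
                  mul_le_mul_of_nonneg_right hue (Real.exp_pos _).le
              _ ≤ (4 / Real.exp 1) * Real.exp (-(t/4)) :=
                  mul_le_mul_of_nonneg_left hx h4e
          have step3 : B * Real.sqrt (Real.exp 1 * N) * ((4 / Real.exp 1) * Real.exp (-(t/4)))
              ≤ (4 / Real.exp 1) * A := by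
            have h0' : (0:ℝ) ≤ 4 / Real.exp 1 := by positivity
            calc B * Real.sqrt (Real.exp 1 * N) * ((4 / Real.exp 1) * Real.exp (-(t/4)))
                = (4 / Real.exp 1) * (B * Real.sqrt (Real.exp 1 * N) * Real.exp (-(t/4))) := by
                  ring
              _ ≤ (4 / Real.exp 1) * A := mul_le_mul_of_nonneg_left hkey2 h0'
          have h4e1 : (4:ℝ) / Real.exp 1 ≤ 2 := by
            rw [div_le_iff₀ he]
            linarith [Real.add_one_le_exp 1]
          calc B * Real.sqrt E.card * u ^ ((1:ℝ)/α)
              ≤ B * Real.sqrt (Real.exp 1 * N) * ((4 / Real.exp 1) * Real.exp (-(t/4))) :=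
                step1.trans (mul_le_mul_of_nonneg_left step2 hBN)
            _ ≤ (4 / Real.exp 1) * A := step3
            _ ≤ 2 * A := mul_le_mul_of_nonneg_right h4e1 hA.le
        calc Real.sqrt (∑ i ∈ E, v i ^ 2) ≤ A + 2 * A := by linarith
          _ = 3 * A := by ring
end
end

section
/- There exists an absolute constant c for which the following holds. Let μ be a probability measure on R^n that is unconditional (invariant under all sign changes of the coordinates) and such that for μ-almost every x ∈ R^n, the non-increasing rearrangement (x_j^*)_{j=1}^n of (|x_j|)_{j=1}^n satisfies x_j^* ≤ L·log(en/j) for every 1 ≤ j ≤ n. Then for every θ ∈ R^n, the linear functional ⟨θ,·⟩ satisfies ‖⟨θ,·⟩‖_{ψ2(μ)} ≤ c·L·( Σ_{j=1}^n (θ^2)_j^*·log^2(en/j) )^{1/2}, where ((θ^2)_j^*)_{j=1}^n is the non-increasing rearrangement of (θ_j^2)_{j=1}^n. In particular, sup_{θ ∈ S^{n−1}} ‖⟨θ,·⟩‖_{ψ2(μ)} ≤ c·L·log n. -/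
open MeasureTheory
open scoped Classical

noncomputable section

/-- The linear functional `⟨x, ·⟩` on `ℝ^n`. -/
def linF {n : ℕ} (x : Fin n → ℝ) : (Fin n → ℝ) → ℝ := fun ω => ∑ j, x j * ω j

/-- A convex body: compact, convex, symmetric, with nonempty interior. -/
def IsConvexBody {n : ℕ} (K : Set (Fin n → ℝ)) : Prop :=
  Convex ℝ K ∧ IsCompact K ∧ (∀ x ∈ K, -x ∈ K) ∧ (interior K).Nonempty

/-- γ₂(K, ψ₂): the γ₂ functional of the class of linear functionals indexed by `K`,
with the ψ₂(μ) metric. -/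
def gamma2K {n : ℕ} (μ : Measure (Fin n → ℝ)) (K : Set (Fin n → ℝ)) : ℝ :=
  gamma2 K (fun x y => psiNorm μ 2 (linF (fun j => x j - y j)))

/-- The Euclidean diameter of a subset of `ℝ^n`. -/
def euclDiam {n : ℕ} (K : Set (Fin n → ℝ)) : ℝ :=
  sSup {d | ∃ x ∈ K, ∃ y ∈ K, d = Real.sqrt (∑ j, (x j - y j) ^ 2)}

/-- `Q₂(μ)`: the equivalence constant between the ψ₂(μ) norm of linear functionals
and the Euclidean norm. -/
def Qconst (n : ℕ) (μ : Measure (Fin n → ℝ)) : ℝ :=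
  sSup {q | ∃ θ : Fin n → ℝ, ∑ j, θ j ^ 2 = 1 ∧ q = psiNorm μ 2 (linF θ)}

/-- The `j`-th (0-indexed) largest value among `(|v i|)_i`:
`rear v j = inf { t ≥ 0 : #{i : |v i| > t} ≤ j }`. -/
def rear {n : ℕ} (v : Fin n → ℝ) (j : ℕ) : ℝ :=
  sInf {t : ℝ | 0 ≤ t ∧ ({i | t < |v i|} : Set (Fin n)).ncard ≤ j}

/-- A measure on `ℝ^n` that is invariant under all sign changes of the coordinates. -/
def Unconditional (n : ℕ) (μ : Measure (Fin n → ℝ)) : Prop :=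
  ∀ ε : Fin n → ℝ, (∀ j, ε j = 1 ∨ ε j = -1) →
    Measure.map (fun x => fun j => ε j * x j) μ = μ

/- ### Auxiliary lemmas -/
open Nat

lemma aux_fact_le (k : ℕ) : (2 * k)! ≤ (2 * k) ^ k * k ! := by
  have h := Nat.factorial_mul_descFactorial (n := 2 * k) (k := k) (by omega)
  have h2 : 2 * k - k = k := by omega
  rw [h2] at h
  calc (2 * k)! = k ! * (2 * k).descFactorial k := h.symm
    _ ≤ k ! * (2 * k) ^ k := Nat.mul_le_mul_left _ (Nat.descFactorial_le_pow _ _)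
    _ = (2 * k) ^ k * k ! := Nat.mul_comm _ _

lemma aux_sum_exp_sign {n : ℕ} (a : Fin n → ℝ) {ρ : ℝ} (ha : ∑ j, a j ^ 2 ≤ ρ ^ 2) (t : ℝ) :
    ∑ ε : Fin n → Bool, Real.exp (t * ∑ j, (if ε j then a j else -a j)) ≤
      2 ^ n * Real.exp (t ^ 2 * ρ ^ 2 / 2) := by
  have key : ∑ ε : Fin n → Bool, Real.exp (t * ∑ j, (if ε j then a j else -a j))
      = ∏ j, (Real.exp (t * a j) + Real.exp (-(t * a j))) := by
    have h1 : ∀ ε : Fin n → Bool, Real.exp (t * ∑ j, (if ε j then a j else -a j))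
        = ∏ j, (if ε j then Real.exp (t * a j) else Real.exp (-(t * a j))) := by
      intro ε
      rw [Finset.mul_sum, Real.exp_sum]
      refine Finset.prod_congr rfl fun j _ => ?_
      by_cases h : ε j <;> simp [h, mul_comm]
    have h2 := Finset.prod_univ_sum (fun _ : Fin n => (Finset.univ : Finset Bool))
      (fun j b => if b then Real.exp (t * a j) else Real.exp (-(t * a j)))
    rw [Fintype.piFinset_univ] at h2
    simp only [h1]
    rw [← h2]
    refine Finset.prod_congr rfl fun j _ => ?_
    simp [Fintype.sum_bool]
  rw [key]
  calc ∏ j, (Real.exp (t * a j) + Real.exp (-(t * a j)))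
      ≤ ∏ j, (2 * Real.exp (t ^ 2 * a j ^ 2 / 2)) := by
        refine Finset.prod_le_prod (fun j _ => by positivity) (fun j _ => ?_)
        have h := Real.cosh_le_exp_half_sq (t * a j)
        rw [Real.cosh_eq] at h
        have := mul_le_mul_of_nonneg_left h (by norm_num : (0:ℝ) ≤ 2)
        calc Real.exp (t * a j) + Real.exp (-(t * a j))
            = 2 * ((Real.exp (t * a j) + Real.exp (-(t * a j))) / 2) := by ring
          _ ≤ 2 * Real.exp ((t * a j) ^ 2 / 2) := this
          _ = 2 * Real.exp (t ^ 2 * a j ^ 2 / 2) := by rw [mul_pow]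
    _ = 2 ^ n * Real.exp (t ^ 2 * (∑ j, a j ^ 2) / 2) := by
        rw [Finset.prod_mul_distrib, Finset.prod_const, ← Real.exp_sum]
        simp [Finset.mul_sum, Finset.sum_div]
    _ ≤ 2 ^ n * Real.exp (t ^ 2 * ρ ^ 2 / 2) := by
        have h2n : (0:ℝ) < 2 ^ n := by positivity
        have := Real.exp_le_exp.mpr (by nlinarith [sq_nonneg t] :
          t ^ 2 * (∑ j, a j ^ 2) / 2 ≤ t ^ 2 * ρ ^ 2 / 2)
        nlinarith

lemma aux_moment {n : ℕ} (a : Fin n → ℝ) {ρ : ℝ} (hρ : 0 < ρ) (ha : ∑ j, a j ^ 2 ≤ ρ ^ 2)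
    (k : ℕ) :
    ∑ ε : Fin n → Bool, (∑ j, (if ε j then a j else -a j)) ^ (2 * k) ≤
      2 ^ n * (k ! * (Real.exp 1 * ρ ^ 2) ^ k) := by
  rcases Nat.eq_zero_or_pos k with hk | hk
  · subst hk
    simp
  · set Z : (Fin n → Bool) → ℝ := fun ε => ∑ j, (if ε j then a j else -a j) with hZ
    have hkpos : (0:ℝ) < 2 * k := by positivity
    set t : ℝ := Real.sqrt (2 * k) / ρ with htdef
    have ht : 0 < t := div_pos (Real.sqrt_pos.mpr hkpos) hρ
    have ht2 : t ^ 2 = 2 * k / ρ ^ 2 := by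
      rw [htdef, div_pow, Real.sq_sqrt hkpos.le]
    -- pointwise moment bound
    have hpt : ∀ z : ℝ, t ^ (2 * k) * z ^ (2 * k) ≤
        ((2 * k)! : ℝ) * ((Real.exp (t * z) + Real.exp (-(t * z))) / 2) := by
      intro z
      have h1 : |t * z| ^ (2 * k) / ((2 * k)! : ℝ) ≤ Real.cosh (|t * z|) := by
        refine le_hasSum (Real.hasSum_cosh |t * z|) k fun j _ => by positivity
      rw [Real.cosh_abs, Real.cosh_eq] at h1
      have h2 : |t * z| ^ (2 * k) = t ^ (2 * k) * z ^ (2 * k) := by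
        rw [abs_mul, mul_pow, abs_of_pos ht, (even_two_mul k).pow_abs]
      rw [h2] at h1
      have hf : (0:ℝ) < ((2 * k)! : ℝ) := by exact_mod_cast Nat.factorial_pos _
      calc t ^ (2 * k) * z ^ (2 * k)
          = (t ^ (2 * k) * z ^ (2 * k) / ((2 * k)! : ℝ)) * ((2 * k)! : ℝ) := by
            field_simp
        _ ≤ Real.cosh (t * z) * ((2 * k)! : ℝ) := by
            rw [Real.cosh_eq]
            exact mul_le_mul_of_nonneg_right h1 hf.le
        _ = ((2 * k)! : ℝ) * ((Real.exp (t * z) + Real.exp (-(t * z))) / 2) := by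
            rw [Real.cosh_eq]; ring
    -- sum the pointwise bound
    have hsum : t ^ (2 * k) * ∑ ε : Fin n → Bool, Z ε ^ (2 * k) ≤
        ((2 * k)! : ℝ) * (2 ^ n * Real.exp (t ^ 2 * ρ ^ 2 / 2)) := by
      rw [Finset.mul_sum]
      calc ∑ ε : Fin n → Bool, t ^ (2 * k) * Z ε ^ (2 * k)
          ≤ ∑ ε : Fin n → Bool,
              ((2 * k)! : ℝ) * ((Real.exp (t * Z ε) + Real.exp (-(t * Z ε))) / 2) :=
            Finset.sum_le_sum fun ε _ => hpt (Z ε)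
        _ = ((2 * k)! : ℝ) *
              ((∑ ε : Fin n → Bool, Real.exp (t * Z ε)) +
                ∑ ε : Fin n → Bool, Real.exp (-t * Z ε)) / 2 := by
            rw [← Finset.mul_sum, ← Finset.sum_add_distrib]
            rw [mul_div_assoc]
            congr 1
            rw [Finset.sum_div]
            refine Finset.sum_congr rfl fun ε _ => ?_
            rw [neg_mul]
        _ ≤ ((2 * k)! : ℝ) * ((2 ^ n * Real.exp (t ^ 2 * ρ ^ 2 / 2) +
              2 ^ n * Real.exp ((-t) ^ 2 * ρ ^ 2 / 2))) / 2 := by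
            have e1 := aux_sum_exp_sign a ha t
            have e2 := aux_sum_exp_sign a ha (-t)
            have hf : (0:ℝ) ≤ ((2 * k)! : ℝ) := by positivity
            have := mul_le_mul_of_nonneg_left (add_le_add e1 e2) hf
            linarith
        _ = ((2 * k)! : ℝ) * (2 ^ n * Real.exp (t ^ 2 * ρ ^ 2 / 2)) := by
            rw [neg_pow]
            ring_nf
    have hek : Real.exp (t ^ 2 * ρ ^ 2 / 2) = Real.exp 1 ^ k := by
      rw [ht2, Real.exp_one_pow]
      congr 1
      field_simp
    rw [hek] at hsum
    have ht2k : t ^ (2 * k) = (2 * k / ρ ^ 2) ^ k := by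
      rw [pow_mul, ht2]
    have hfle : ((2 * k)! : ℝ) ≤ (2 * k) ^ k * k ! := by
      exact_mod_cast aux_fact_le k
    have hkR : (0:ℝ) < (2 * k / ρ ^ 2) ^ k := by positivity
    rw [ht2k] at hsum
    rw [← le_div_iff₀' hkR] at hsum
    refine hsum.trans ?_
    rw [div_le_iff₀ hkR]
    have key : ((2:ℝ) * k / ρ ^ 2) ^ k * (ρ ^ 2) ^ k = (2 * k) ^ k := by
      rw [← mul_pow]
      congr 1
      field_simp
    calc ((2 * k)! : ℝ) * (2 ^ n * Real.exp 1 ^ k)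
        ≤ ((2 * k) ^ k * k !) * (2 ^ n * Real.exp 1 ^ k) :=
          mul_le_mul_of_nonneg_right hfle (by positivity)
      _ = 2 ^ n * (k ! * (Real.exp 1 * ρ ^ 2) ^ k) * (2 * k / ρ ^ 2) ^ k := by
          rw [mul_pow (Real.exp 1) (ρ ^ 2), div_pow]
          have hρ0 : ((ρ:ℝ) ^ 2) ^ k ≠ 0 := by positivity
          field_simp

lemma aux_khintchine {n : ℕ} (a : Fin n → ℝ) {ρ : ℝ} (hρ : 0 < ρ) (ha : ∑ j, a j ^ 2 ≤ ρ ^ 2) :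
    ∑ ε : Fin n → Bool, Real.exp ((∑ j, (if ε j then a j else -a j)) ^ 2 / (3 * ρ) ^ 2) ≤
      2 * 2 ^ n := by
  set Z : (Fin n → Bool) → ℝ := fun ε => ∑ j, (if ε j then a j else -a j) with hZ
  set q : ℝ := Real.exp 1 / 9 with hq
  have hed9 := Real.exp_one_lt_d9
  have hq0 : 0 ≤ q := by positivity
  have hq1 : q < 1 := by
    rw [hq, div_lt_one (by norm_num : (0:ℝ) < 9)]
    linarith
  have hqhalf : q ≤ 1 / 2 := by
    rw [hq, div_le_div_iff₀ (by norm_num) (by norm_num)]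
    linarith
  have hexp : ∀ ε, Real.exp (Z ε ^ 2 / (3 * ρ) ^ 2)
      = ∑' k : ℕ, (Z ε ^ 2 / (3 * ρ) ^ 2) ^ k / k ! := by
    intro ε
    rw [Real.exp_eq_exp_ℝ, NormedSpace.exp_eq_tsum_div]
  have hsummable : ∀ ε, Summable fun k : ℕ => (Z ε ^ 2 / (3 * ρ) ^ 2) ^ k / k ! :=
    fun ε => Real.summable_pow_div_factorial _
  have hterm : ∀ k : ℕ, ∑ ε : Fin n → Bool, (Z ε ^ 2 / (3 * ρ) ^ 2) ^ k / k !
      ≤ 2 ^ n * q ^ k := by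
    intro k
    have h1 : ∀ ε : Fin n → Bool, (Z ε ^ 2 / (3 * ρ) ^ 2) ^ k / k !
        = Z ε ^ (2 * k) / ((9 * ρ ^ 2) ^ k * k !) := by
      intro ε
      rw [div_pow, ← pow_mul, show ((3:ℝ) * ρ) ^ 2 = 9 * ρ ^ 2 by ring, div_div]
    simp_rw [h1]
    rw [← Finset.sum_div]
    have hmom := aux_moment a hρ ha k
    have hden : (0:ℝ) < (9 * ρ ^ 2) ^ k * k ! := by positivity
    rw [div_le_iff₀ hden]
    refine hmom.trans (le_of_eq ?_)
    rw [hq, div_pow, mul_pow (Real.exp 1) (ρ ^ 2), mul_pow (9:ℝ) (ρ ^ 2)]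
    have h9 : ((9:ℝ)) ^ k ≠ 0 := by positivity
    field_simp
  calc ∑ ε : Fin n → Bool, Real.exp (Z ε ^ 2 / (3 * ρ) ^ 2)
      = ∑' k : ℕ, ∑ ε : Fin n → Bool, (Z ε ^ 2 / (3 * ρ) ^ 2) ^ k / k ! := by
        simp_rw [hexp]
        exact (Summable.tsum_finsetSum fun ε _ => hsummable ε).symm
    _ ≤ ∑' k : ℕ, 2 ^ n * q ^ k := by
        refine Summable.tsum_le_tsum hterm ?_ ?_
        · exact (hasSum_sum fun ε _ => (hsummable ε).hasSum).summable
        · exact (summable_geometric_of_lt_one hq0 hq1).mul_left _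
    _ = 2 ^ n * (1 - q)⁻¹ := by
        rw [tsum_mul_left, tsum_geometric_of_lt_one hq0 hq1]
    _ ≤ 2 * 2 ^ n := by
        have h2 : (0:ℝ) < 1 - q := by linarith
        have h3 : (1 - q)⁻¹ ≤ 2 := by
          rw [inv_le_comm₀ h2 (by norm_num : (0:ℝ) < 2)]
          linarith
        have h2n : (0:ℝ) ≤ 2 ^ n := by positivity
        nlinarith

lemma aux_rear_nonneg {n : ℕ} (v : Fin n → ℝ) (j : ℕ) : 0 ≤ rear v j :=
  Real.sInf_nonneg fun _ hx => hx.1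

lemma aux_rear_exists {n : ℕ} (v : Fin n → ℝ) :
    ∃ σ : Equiv.Perm (Fin n), (∀ j : Fin n, rear v j.val = |v (σ j)|) ∧
      Antitone fun j : Fin n => |v (σ j)| := by
  set σ := Tuple.sort (fun i => -|v i|) with hσdef
  set w : Fin n → ℝ := fun j => |v (σ j)| with hw
  have hanti : Antitone w := by
    intro i j hij
    have h := Tuple.monotone_sort (fun i => -|v i|) hij
    simpa [hw] using h
  refine ⟨σ, fun j => ?_, hanti⟩
  have hmem : 0 ≤ w j ∧ ({i | w j < |v i|} : Set (Fin n)).ncard ≤ j.val := by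
    refine ⟨abs_nonneg _, ?_⟩
    have himg : ({i | w j < |v i|} : Set (Fin n)) = σ '' {k | w j < w k} := by
      ext i
      constructor
      · intro hi
        exact ⟨σ.symm i, by simpa [hw] using hi, σ.apply_symm_apply i⟩
      · rintro ⟨k, hk, rfl⟩
        exact hk
    rw [himg, Set.ncard_image_of_injective _ σ.injective]
    have hsub : {k : Fin n | w j < w k} ⊆ Set.Iio j := by
      intro k hk
      by_contra h
      exact absurd hk (not_lt.mpr (hanti (not_lt.mp h)))
    calc ({k : Fin n | w j < w k}).ncard ≤ (Set.Iio j).ncard :=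
          Set.ncard_le_ncard hsub (Set.toFinite _)
      _ = j.val := by rw [← Finset.coe_Iio, Set.ncard_coe_finset, Fin.card_Iio]
  refine le_antisymm (csInf_le ⟨0, fun x hx => hx.1⟩ hmem) (le_csInf ⟨w j, hmem⟩ ?_)
  rintro t ⟨ht0, htc⟩
  by_contra hlt
  push_neg at hlt
  have hsub : σ '' Set.Iic j ⊆ {i : Fin n | t < |v i|} := by
    rintro _ ⟨k, hk, rfl⟩
    exact lt_of_lt_of_le hlt (hanti hk)
  have hcard : j.val + 1 ≤ ({i : Fin n | t < |v i|}).ncard := by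
    have h := Set.ncard_le_ncard hsub (Set.toFinite _)
    rwa [Set.ncard_image_of_injective _ σ.injective, ← Finset.coe_Iic,
      Set.ncard_coe_finset, Fin.card_Iic] at h
  omega

lemma aux_sum_rear_sq {n : ℕ} (v : Fin n → ℝ) :
    ∑ j : Fin n, rear v j.val ^ 2 = ∑ i, v i ^ 2 := by
  obtain ⟨σ, hσ, -⟩ := aux_rear_exists v
  calc ∑ j : Fin n, rear v j.val ^ 2 = ∑ j : Fin n, |v (σ j)| ^ 2 :=
        Finset.sum_congr rfl fun j _ => by rw [hσ j]
    _ = ∑ i, |v i| ^ 2 := Equiv.sum_comp σ fun i => |v i| ^ 2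
    _ = ∑ i, v i ^ 2 := by simp [sq_abs]

lemma aux_rearrangement {n : ℕ} (θ x : Fin n → ℝ) :
    ∑ i, (θ i * x i) ^ 2 ≤ ∑ j : Fin n, rear θ j.val ^ 2 * rear x j.val ^ 2 := by
  obtain ⟨σ, hσ, hσa⟩ := aux_rear_exists θ
  obtain ⟨τ, hτ, hτa⟩ := aux_rear_exists x
  set A : Fin n → ℝ := fun j => |θ (σ j)| ^ 2 with hA
  set B : Fin n → ℝ := fun j => |x (τ j)| ^ 2 with hB
  have hAa : Antitone A := fun i j hij => pow_le_pow_left₀ (abs_nonneg _) (hσa hij) 2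
  have hBa : Antitone B := fun i j hij => pow_le_pow_left₀ (abs_nonneg _) (hτa hij) 2
  have hM : Monovary A B := by
    intro i j hij
    rcases le_or_gt i j with h | h
    · exact absurd (hBa h) (not_le.mpr hij)
    · exact hAa h.le
  have key := hM.sum_mul_comp_perm_le_sum_mul (σ := σ.trans τ.symm)
  calc ∑ i, (θ i * x i) ^ 2
      = ∑ j : Fin n, (θ (σ j) * x (σ j)) ^ 2 :=
        (Equiv.sum_comp σ fun i => (θ i * x i) ^ 2).symm
    _ = ∑ j : Fin n, A j * B ((σ.trans τ.symm) j) := by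
        refine Finset.sum_congr rfl fun j _ => ?_
        simp only [hA, hB, Equiv.trans_apply, Equiv.apply_symm_apply]
        rw [mul_pow, sq_abs, sq_abs]
    _ ≤ ∑ j, A j * B j := key
    _ = ∑ j : Fin n, rear θ j.val ^ 2 * rear x j.val ^ 2 :=
        Finset.sum_congr rfl fun j _ => by rw [hσ j, hτ j]

lemma aux_linF_measurable {n : ℕ} (θ : Fin n → ℝ) : Measurable (linF θ) :=
  Finset.measurable_sum Finset.univ fun j _ => by fun_prop

lemma aux_psiNorm_le {Ω : Type*} [MeasurableSpace Ω] (μ : Measure Ω) (f : Ω → ℝ) {C : ℝ}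
    (hC : 0 < C) (h : ∫ ω, Real.exp ((f ω) ^ 2 / C ^ 2) ∂μ ≤ 2) : psiNorm μ 2 f ≤ C := by
  refine csInf_le ⟨0, fun x hx => le_of_lt hx.1⟩ ?_
  refine ⟨hC, ?_⟩
  have heq : (fun ω => Real.exp (|f ω| ^ (2:ℝ) / C ^ (2:ℝ)))
      = fun ω => Real.exp ((f ω) ^ 2 / C ^ 2) := by
    funext ω
    rw [Real.rpow_two, Real.rpow_two, sq_abs]
  rw [heq]
  exact h

lemma aux_core {n : ℕ} (μ : Measure (Fin n → ℝ)) [IsProbabilityMeasure μ] (θ : Fin n → ℝ)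
    {ρ : ℝ} (hρ : 0 < ρ) (hU : Unconditional n μ)
    (hae : ∀ᵐ x ∂μ, ∑ j, (θ j * x j) ^ 2 ≤ ρ ^ 2) :
    ∫ x, Real.exp ((linF θ x) ^ 2 / (3 * ρ) ^ 2) ∂μ ≤ 2 := by
  set g : (Fin n → ℝ) → ℝ := fun x => Real.exp ((linF θ x) ^ 2 / (3 * ρ) ^ 2) with hg
  have hgmeas : Measurable g :=
    (((aux_linF_measurable θ).pow_const 2).div_const _).exp
  by_cases hint : Integrable g μ
  · set T : (Fin n → Bool) → (Fin n → ℝ) → (Fin n → ℝ) :=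
      fun ε x => fun j => (if ε j then (1:ℝ) else -1) * x j with hT
    have hTmeas : ∀ ε, Measurable (T ε) := fun ε =>
      measurable_pi_lambda _ fun j => (measurable_pi_apply j).const_mul _
    have hmap : ∀ ε, Measure.map (T ε) μ = μ := fun ε =>
      hU (fun j => if ε j then (1:ℝ) else -1) fun j => by
        by_cases h : ε j <;> simp [h]
    have h1 : ∀ ε, ∫ x, g x ∂μ = ∫ x, g (T ε x) ∂μ := by
      intro ε
      conv_lhs => rw [← hmap ε]
      exact integral_map (hTmeas ε).aemeasurable
        (by rw [hmap]; exact hgmeas.aestronglyMeasurable)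
    have hint' : ∀ ε, Integrable (fun x => g (T ε x)) μ := by
      intro ε
      have h2 : Integrable g (Measure.map (T ε) μ) := by rw [hmap]; exact hint
      exact h2.comp_measurable (hTmeas ε)
    have h2 : (2 ^ n : ℝ) * ∫ x, g x ∂μ = ∫ x, ∑ ε : Fin n → Bool, g (T ε x) ∂μ := by
      rw [integral_finset_sum _ fun ε _ => hint' ε]
      have hcongr : ∀ ε ∈ (Finset.univ : Finset (Fin n → Bool)),
          ∫ x, g (T ε x) ∂μ = ∫ x, g x ∂μ := fun ε _ => (h1 ε).symm
      rw [Finset.sum_congr rfl hcongr, Finset.sum_const, Finset.card_univ]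
      have hcard : Fintype.card (Fin n → Bool) = 2 ^ n := by
        simp [Fintype.card_fun]
      rw [hcard, nsmul_eq_mul]
      push_cast
      ring
    have h3 : ∀ᵐ x ∂μ, ∑ ε : Fin n → Bool, g (T ε x) ≤ 2 * 2 ^ n := by
      filter_upwards [hae] with x hx
      have hk := aux_khintchine (fun j => θ j * x j) hρ hx
      refine le_trans (le_of_eq ?_) hk
      refine Finset.sum_congr rfl fun ε _ => ?_
      have hlin : linF θ (T ε x) = ∑ j, (if ε j then θ j * x j else -(θ j * x j)) := by
        simp only [linF, hT]
        refine Finset.sum_congr rfl fun j _ => ?_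
        by_cases h : ε j <;> simp [h]
      simp only [hg, hlin]
    have h4 : ∫ x, (∑ ε : Fin n → Bool, g (T ε x)) ∂μ ≤ 2 * 2 ^ n := by
      have hmono := integral_mono_ae (integrable_finset_sum _ fun ε _ => hint' ε)
        (integrable_const (2 * 2 ^ n : ℝ)) h3
      simpa using hmono
    have h2n : (0:ℝ) < 2 ^ n := by positivity
    have h4' : (2 ^ n : ℝ) * ∫ x, g x ∂μ ≤ 2 ^ n * 2 := by
      rw [h2]
      linarith
    exact le_of_mul_le_mul_left h4' h2n
  · rw [hg, integral_undef hint]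
    norm_num

/-- ψ₂ estimates for linear functionals under an unconditional measure with
logarithmically decaying coordinates. -/
theorem statement18 :
    ∃ c : ℝ, 0 < c ∧
      ∀ (n : ℕ) (μ : Measure (Fin n → ℝ)) [IsProbabilityMeasure μ] (L : ℝ),
        2 ≤ n → 0 < L → Unconditional n μ →
        (∀ᵐ x ∂μ, ∀ j : Fin n,
          rear x j.val ≤ L * Real.log (Real.exp 1 * n / ((j.val : ℝ) + 1))) →
        (∀ θ : Fin n → ℝ,
          psiNorm μ 2 (linF θ) ≤
            c * L * Real.sqrt (∑ j : Fin n,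
              (rear θ j.val) ^ 2 * Real.log (Real.exp 1 * n / ((j.val : ℝ) + 1)) ^ 2)) ∧
        ∀ θ : Fin n → ℝ, ∑ j, θ j ^ 2 = 1 →
          psiNorm μ 2 (linF θ) ≤ c * L * Real.log n := by
  refine ⟨9, by norm_num, ?_⟩
  intro n μ _ L hn hL hU hae
  have hn2 : (2:ℝ) ≤ (n:ℝ) := by exact_mod_cast hn
  have he1 : (1:ℝ) < Real.exp 1 := by
    have := Real.add_one_le_exp 1
    linarith
  have hlogpos : ∀ j : Fin n, 0 < Real.log (Real.exp 1 * n / ((j.val : ℝ) + 1)) := by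
    intro j
    apply Real.log_pos
    have hj : ((j.val : ℝ) + 1) ≤ (n:ℝ) := by
      have : j.val + 1 ≤ n := j.isLt
      exact_mod_cast this
    rw [lt_div_iff₀ (by positivity : (0:ℝ) < (j.val:ℝ) + 1)]
    nlinarith
  have key : ∀ θ : Fin n → ℝ,
      psiNorm μ 2 (linF θ) ≤ 3 * L * Real.sqrt (∑ j : Fin n,
        rear θ j.val ^ 2 * Real.log (Real.exp 1 * n / ((j.val : ℝ) + 1)) ^ 2) := by
    intro θ
    set R2 := ∑ j : Fin n,
      rear θ j.val ^ 2 * Real.log (Real.exp 1 * n / ((j.val : ℝ) + 1)) ^ 2 with hR2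
    have hR2nonneg : 0 ≤ R2 := Finset.sum_nonneg fun j _ => by positivity
    by_cases hz : R2 = 0
    · -- degenerate case : θ = 0
      have hrear0 : ∀ j : Fin n, rear θ j.val = 0 := by
        intro j
        have h := (Finset.sum_eq_zero_iff_of_nonneg
          (fun j _ => by positivity)).mp hz.symm.symm j (Finset.mem_univ j)
        rcases mul_eq_zero.mp h with h1 | h2
        · exact pow_eq_zero_iff two_ne_zero |>.mp h1
        · exact absurd h2 (by have := hlogpos j; positivity)
      have hθ0 : ∀ i, θ i = 0 := by
        have hsum : ∑ i, θ i ^ 2 = 0 := by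
          rw [← aux_sum_rear_sq θ]
          exact Finset.sum_eq_zero fun j _ => by rw [hrear0 j]; ring
        intro i
        have := (Finset.sum_eq_zero_iff_of_nonneg
          (fun i _ => sq_nonneg _)).mp hsum i (Finset.mem_univ i)
        exact pow_eq_zero_iff two_ne_zero |>.mp this
      have hlin0 : linF θ = fun _ => (0:ℝ) :=
        funext fun ω => Finset.sum_eq_zero fun j _ => by rw [hθ0 j]; ring
      have hmem : ∀ c : ℝ, 0 < c → c ∈ psiSet μ 2 (linF θ) := by
        intro c hc
        refine ⟨hc, ?_⟩
        have heq : (fun ω => Real.exp (|linF θ ω| ^ (2:ℝ) / c ^ (2:ℝ)))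
            = fun _ => (1:ℝ) := by
          funext ω
          rw [hlin0]
          simp [Real.zero_rpow (by norm_num : (2:ℝ) ≠ 0)]
        calc ∫ ω, Real.exp (|linF θ ω| ^ (2:ℝ) / c ^ (2:ℝ)) ∂μ
            = ∫ _ω, (1:ℝ) ∂μ := by rw [heq]
          _ = 1 := by simp
          _ ≤ 2 := by norm_num
      have hle0 : psiNorm μ 2 (linF θ) ≤ 0 := by
        refine le_of_forall_pos_le_add fun ε hε => ?_
        have := csInf_le ⟨0, fun x hx => le_of_lt hx.1⟩ (hmem ε hε)
        simpa [psiNorm] using this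
      refine hle0.trans (by positivity)
    · have hR2pos : 0 < R2 := hR2nonneg.lt_of_ne (Ne.symm hz)
      have hsq : 0 < Real.sqrt R2 := Real.sqrt_pos.mpr hR2pos
      set ρ : ℝ := L * Real.sqrt R2 with hρdef
      have hρ : 0 < ρ := mul_pos hL hsq
      have hae' : ∀ᵐ x ∂μ, ∑ j, (θ j * x j) ^ 2 ≤ ρ ^ 2 := by
        filter_upwards [hae] with x hx
        have h1 := aux_rearrangement θ x
        have h2 : ∑ j : Fin n, rear θ j.val ^ 2 * rear x j.val ^ 2 ≤
            ∑ j : Fin n, rear θ j.val ^ 2 *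
              (L * Real.log (Real.exp 1 * n / ((j.val:ℝ) + 1))) ^ 2 := by
          refine Finset.sum_le_sum fun j _ => ?_
          refine mul_le_mul_of_nonneg_left ?_ (sq_nonneg _)
          exact pow_le_pow_left₀ (aux_rear_nonneg x j.val) (hx j) 2
        have h3 : ∑ j : Fin n, rear θ j.val ^ 2 *
            (L * Real.log (Real.exp 1 * n / ((j.val:ℝ) + 1))) ^ 2 = ρ ^ 2 := by
          rw [hρdef, mul_pow, Real.sq_sqrt hR2nonneg, hR2, Finset.mul_sum]
          refine Finset.sum_congr rfl fun j _ => by ring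
        linarith
      have hcore := aux_core μ θ hρ hU hae'
      have hψ := aux_psiNorm_le μ (linF θ) (by positivity : (0:ℝ) < 3 * ρ) hcore
      calc psiNorm μ 2 (linF θ) ≤ 3 * ρ := hψ
        _ = 3 * L * Real.sqrt R2 := by rw [hρdef]; ring
  refine ⟨fun θ => ?_, fun θ hθ => ?_⟩
  · refine (key θ).trans ?_
    have hs : (0:ℝ) ≤ Real.sqrt (∑ j : Fin n,
        rear θ j.val ^ 2 * Real.log (Real.exp 1 * n / ((j.val : ℝ) + 1)) ^ 2) :=
      Real.sqrt_nonneg _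
    nlinarith
  · have h1 := key θ
    have hlogn : Real.log 2 ≤ Real.log n := by
      apply Real.log_le_log (by norm_num)
      exact hn2
    have hlog2 := Real.log_two_gt_d9
    have hle : ∀ j : Fin n,
        Real.log (Real.exp 1 * n / ((j.val:ℝ) + 1)) ≤ 1 + Real.log n := by
      intro j
      have h2 : Real.exp 1 * n / ((j.val:ℝ) + 1) ≤ Real.exp 1 * n := by
        refine _root_.div_le_self (by positivity) ?_
        have hj0 : (0:ℝ) ≤ (j.val : ℝ) := by positivity
        linarith
      have h3 : Real.log (Real.exp 1 * n) = 1 + Real.log n := by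
        rw [Real.log_mul (Real.exp_ne_zero 1) (by positivity : (n:ℝ) ≠ 0), Real.log_exp]
      calc Real.log (Real.exp 1 * n / ((j.val:ℝ) + 1))
          ≤ Real.log (Real.exp 1 * n) := Real.log_le_log (by positivity) h2
        _ = 1 + Real.log n := h3
    have hsum : (∑ j : Fin n,
        rear θ j.val ^ 2 * Real.log (Real.exp 1 * n / ((j.val : ℝ) + 1)) ^ 2)
        ≤ (1 + Real.log n) ^ 2 := by
      calc ∑ j : Fin n,
          rear θ j.val ^ 2 * Real.log (Real.exp 1 * n / ((j.val : ℝ) + 1)) ^ 2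
          ≤ ∑ j : Fin n, rear θ j.val ^ 2 * (1 + Real.log n) ^ 2 := by
            refine Finset.sum_le_sum fun j _ => ?_
            refine mul_le_mul_of_nonneg_left ?_ (sq_nonneg _)
            exact pow_le_pow_left₀ (le_of_lt (hlogpos j)) (hle j) 2
        _ = (∑ j : Fin n, rear θ j.val ^ 2) * (1 + Real.log n) ^ 2 := by
            rw [← Finset.sum_mul]
        _ = (1 + Real.log n) ^ 2 := by rw [aux_sum_rear_sq θ, hθ, one_mul]
    have h0 : (0:ℝ) ≤ 1 + Real.log n := by linarith
    have hsqrt : Real.sqrt (∑ j : Fin n,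
        rear θ j.val ^ 2 * Real.log (Real.exp 1 * n / ((j.val : ℝ) + 1)) ^ 2)
        ≤ 1 + Real.log n := by
      calc Real.sqrt (∑ j : Fin n,
          rear θ j.val ^ 2 * Real.log (Real.exp 1 * n / ((j.val : ℝ) + 1)) ^ 2)
          ≤ Real.sqrt ((1 + Real.log n) ^ 2) := Real.sqrt_le_sqrt hsum
        _ = 1 + Real.log n := Real.sqrt_sq h0
    calc psiNorm μ 2 (linF θ)
        ≤ 3 * L * Real.sqrt (∑ j : Fin n,
            rear θ j.val ^ 2 * Real.log (Real.exp 1 * n / ((j.val : ℝ) + 1)) ^ 2) := h1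
      _ ≤ 3 * L * (1 + Real.log n) := by
          refine mul_le_mul_of_nonneg_left hsqrt (by positivity)
      _ ≤ 9 * L * Real.log n := by nlinarith
end
end
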